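/- Let f : ℝ → ℝ be twice differentiable on an interval I with f > 0, f' never zero, and satisfying the α-catenary equation f'' / (1 + f'^2) = α/f for a constant α ≠ 0. Then there is a constant C such that f(s)^(2α) = C·(1 + f'(s)^2) on I (i.e. (1+f'^2)·f^(−2α) is a first integral). -/

import Mathlib

open Set

/-- First integral of the `α`-catenary equation:
if `f'' / (1 + f'^2) = α / f` with `f > 0`, `f' ≠ 0`, `α ≠ 0`, then
`f ^ (2α) = C (1 + f'^2)` for some constant `C`. -/
theorem stmt2 (a b α : ℝ) (hab : a < b) (hα : α ≠ 0) (f : ℝ → ℝ)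
    (hf : ContDiffOn ℝ 2 f (Ioo a b))
    (hpos : ∀ s ∈ Ioo a b, 0 < f s)
    (hf' : ∀ s ∈ Ioo a b, deriv f s ≠ 0)
    (heq : ∀ s ∈ Ioo a b,
      deriv (deriv f) s / (1 + (deriv f s) ^ 2) = α / f s) :
    ∃ C : ℝ, ∀ s ∈ Ioo a b, f s ^ (2 * α) = C * (1 + (deriv f s) ^ 2) := by
  set I := Ioo a b with hI
  have hIopen : IsOpen I := isOpen_Ioo
  -- differentiability facts
  have hsplit := (contDiffOn_succ_iff_deriv_of_isOpen (f := f) (n := 1) hIopen).1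
    (by exact_mod_cast hf)
  have hdf : DifferentiableOn ℝ f I := hsplit.1
  have hdf' : DifferentiableOn ℝ (deriv f) I := hsplit.2.2.differentiableOn one_ne_zero
  set g : ℝ → ℝ := fun s => f s ^ (2 * α) * (1 + (deriv f s) ^ 2)⁻¹ with hg
  have key : ∀ s ∈ I, HasDerivAt g 0 s := by
    intro s hs
    have hfs : 0 < f s := hpos s hs
    have hden : (0:ℝ) < 1 + (deriv f s) ^ 2 := by positivity
    have hD1 : HasDerivAt f (deriv f s) s :=
      (hdf.differentiableAt (hIopen.mem_nhds hs)).hasDerivAt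
    have hD2 : HasDerivAt (deriv f) (deriv (deriv f) s) s :=
      (hdf'.differentiableAt (hIopen.mem_nhds hs)).hasDerivAt
    have hA : HasDerivAt (fun t => f t ^ (2 * α))
        (deriv f s * (2 * α) * f s ^ (2 * α - 1)) s :=
      hD1.rpow_const (Or.inl hfs.ne')
    have hBpre : HasDerivAt (fun t => 1 + (deriv f t) ^ 2)
        (0 + 2 * deriv f s ^ (2 - 1) * deriv (deriv f) s) s :=
      (hasDerivAt_const s (1:ℝ)).add (hD2.pow 2)
    have hB : HasDerivAt (fun t => (1 + (deriv f t) ^ 2)⁻¹)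
        (-(0 + 2 * deriv f s ^ (2 - 1) * deriv (deriv f) s) / (1 + (deriv f s) ^ 2) ^ 2) s :=
      hBpre.inv hden.ne'
    have hGD := hA.mul hB
    have hvv : deriv (deriv f) s = α / f s * (1 + (deriv f s) ^ 2) := by
      have := heq s hs
      field_simp at this ⊢
      linarith [this]
    have hpow : f s ^ (2 * α - 1) = f s ^ (2 * α) / f s := Real.rpow_sub_one hfs.ne' _
    have hzero : deriv f s * (2 * α) * f s ^ (2 * α - 1) * (1 + (deriv f s) ^ 2)⁻¹ +
        f s ^ (2 * α) *
          (-(0 + 2 * deriv f s ^ (2 - 1) * deriv (deriv f) s) / (1 + (deriv f s) ^ 2) ^ 2) = 0 := by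
      rw [hvv, hpow]
      field_simp
      ring
    rw [hzero] at hGD
    exact hGD
  -- constancy
  have hmid : (a + b) / 2 ∈ I := by constructor <;> [linarith; linarith]
  refine ⟨g ((a + b) / 2), fun s hs => ?_⟩
  have hconst : g s = g ((a + b) / 2) := by
    apply (convex_Ioo a b).is_const_of_fderivWithin_eq_zero
      (fun t ht => ((key t ht).differentiableAt).differentiableWithinAt)
      (fun t ht => ?_) hs hmid
    rw [fderivWithin_of_isOpen hIopen ht, (key t ht).hasFDerivAt.fderiv]
    ext x; simp
  have hden : (0:ℝ) < 1 + (deriv f s) ^ 2 := by positivity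
  have hden2 : (0:ℝ) < 1 + (deriv f ((a + b) / 2)) ^ 2 := by positivity
  have hconst' : f s ^ (2 * α) * (1 + (deriv f s) ^ 2)⁻¹ =
      f ((a + b) / 2) ^ (2 * α) * (1 + (deriv f ((a + b) / 2)) ^ 2)⁻¹ := hconst
  show f s ^ (2 * α) =
      f ((a + b) / 2) ^ (2 * α) * (1 + (deriv f ((a + b) / 2)) ^ 2)⁻¹ * (1 + (deriv f s) ^ 2)
  field_simp at hconst' ⊢
  linarith [hconst']
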